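/- Let α, ν ∈ (0,1) and let x ∈ Incomp(α,ν) ⊆ ℝⁿ. Then the set Θ = { i ∈ [n] : ν/√(2n) < |x_i| ≤ √(2/(αn)) } satisfies |Θ| > αn/2. -/

import Mathlib

open MeasureTheory ProbabilityTheory Matrix Finset Real
open scoped ENNReal RealInnerProductSpace

noncomputable section

/-- The `ℓ²→ℓ²` operator (spectral) norm of a square real matrix. -/
def specNorm {n : ℕ} (M : Matrix (Fin n) (Fin n) ℝ) : ℝ :=
  ‖LinearMap.toContinuousLinearMap (Matrix.toEuclideanLin M)‖

/-- Matrix–vector product, as a map on Euclidean space. -/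
def mulVecE {n : ℕ} (M : Matrix (Fin n) (Fin n) ℝ) (x : EuclideanSpace ℝ (Fin n)) :
    EuclideanSpace ℝ (Fin n) :=
  (WithLp.equiv 2 _).symm (M.mulVec ((WithLp.equiv 2 _) x))

/-- The smallest singular value: `inf { ‖Mx‖₂ : ‖x‖₂ = 1 }`. -/
def sMin {n : ℕ} (M : Matrix (Fin n) (Fin n) ℝ) : ℝ :=
  sInf {r : ℝ | ∃ x : EuclideanSpace ℝ (Fin n), ‖x‖ = 1 ∧ r = ‖mulVecE M x‖}

/-- Number of nonzero coordinates of a vector. -/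
def suppCard {n : ℕ} (x : EuclideanSpace ℝ (Fin n)) : ℕ :=
  (Finset.univ.filter fun i => x i ≠ 0).card

/-- The set of `(α,ν)`-compressible unit vectors. -/
def compSet (n : ℕ) (α ν : ℝ) : Set (EuclideanSpace ℝ (Fin n)) :=
  {x | ‖x‖ = 1 ∧ ∃ v : EuclideanSpace ℝ (Fin n),
    ‖v‖ = 1 ∧ (suppCard v : ℝ) ≤ α * n ∧ ‖x - v‖ ≤ ν}

/-- The set of `(α,ν)`-incompressible unit vectors. -/
def incompSet (n : ℕ) (α ν : ℝ) : Set (EuclideanSpace ℝ (Fin n)) :=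
  {x : EuclideanSpace ℝ (Fin n) | ‖x‖ = 1} \ compSet n α ν

set_option maxHeartbeats 1000000 in
/-- incompressible vectors are spread. -/
theorem stmt9 (n : ℕ) (α ν : ℝ) (hα0 : 0 < α) (hα1 : α < 1) (hν0 : 0 < ν) (hν1 : ν < 1)
    (x : EuclideanSpace ℝ (Fin n)) (hx : x ∈ incompSet n α ν) :
    α * n / 2 <
      ((Finset.univ.filter fun i : Fin n =>
        ν / Real.sqrt (2 * n) < |x i| ∧ |x i| ≤ Real.sqrt (2 / (α * n))).card : ℝ) := by
  classical
  obtain ⟨hx1, hxc⟩ := hx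
  simp only [Set.mem_setOf_eq] at hx1
  have hn0 : 0 < n := by
    by_contra h
    have hn : n = 0 := by omega
    subst hn
    have hz : x = 0 := Subsingleton.elim x 0
    rw [hz, norm_zero] at hx1
    norm_num at hx1
  have hnR : 0 < (n : ℝ) := by exact_mod_cast hn0
  have hαn : 0 < α * n := mul_pos hα0 hnR
  have hsum : ∑ i, (x i) ^ 2 = 1 := by
    have h := EuclideanSpace.norm_eq x
    rw [hx1] at h
    have h2 : Real.sqrt (∑ i, ‖x i‖ ^ 2) = 1 := h.symm
    have h3 := Real.sqrt_eq_one.mp h2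
    simpa [Real.norm_eq_abs, sq_abs] using h3
  have hnneg : ∀ i : Fin n, 0 ≤ (x i) ^ 2 := fun i => sq_nonneg _
  set Θ := Finset.univ.filter (fun i : Fin n =>
      ν / Real.sqrt (2 * n) < |x i| ∧ |x i| ≤ Real.sqrt (2 / (α * n))) with hΘdef
  by_contra hcon
  push_neg at hcon
  apply hxc
  set L := Finset.univ.filter (fun i : Fin n => Real.sqrt (2 / (α * n)) < |x i|) with hLdef
  set B := Finset.univ.filter (fun i : Fin n => ν / Real.sqrt (2 * n) < |x i|) with hBdef
  -- bound on the cardinality of L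
  have hLsum : (L.card : ℝ) * (2 / (α * n)) ≤ ∑ i ∈ L, (x i) ^ 2 := by
    have hterm : ∀ i ∈ L, 2 / (α * n) ≤ (x i) ^ 2 := by
      intro i hi
      rw [hLdef, Finset.mem_filter] at hi
      have h1 : Real.sqrt (2 / (α * n)) < |x i| := hi.2
      have h2 : (Real.sqrt (2 / (α * n))) ^ 2 ≤ |x i| ^ 2 :=
        pow_le_pow_left₀ (Real.sqrt_nonneg _) h1.le 2
      rwa [Real.sq_sqrt (by positivity), sq_abs] at h2
    calc (L.card : ℝ) * (2 / (α * n)) = ∑ _i ∈ L, (2 / (α * n)) := by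
          rw [Finset.sum_const, nsmul_eq_mul]
      _ ≤ ∑ i ∈ L, (x i) ^ 2 := Finset.sum_le_sum hterm
  have hLle1 : ∑ i ∈ L, (x i) ^ 2 ≤ 1 := by
    rw [← hsum]
    exact Finset.sum_le_sum_of_subset_of_nonneg (Finset.subset_univ _)
      (fun i _ _ => hnneg i)
  have hLcard : (L.card : ℝ) ≤ α * n / 2 := by
    have h := hLsum.trans hLle1
    have h4 := mul_le_mul_of_nonneg_right h hαn.le
    rw [one_mul, mul_assoc, div_mul_cancel₀ (2:ℝ) hαn.ne'] at h4
    linarith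
  -- B ⊆ Θ ∪ L
  have hBsub : B ⊆ Θ ∪ L := by
    intro i hi
    rw [hBdef, Finset.mem_filter] at hi
    rcases le_or_gt (|x i|) (Real.sqrt (2 / (α * n))) with h | h
    · exact Finset.mem_union_left _
        (by rw [hΘdef, Finset.mem_filter]; exact ⟨Finset.mem_univ _, hi.2, h⟩)
    · exact Finset.mem_union_right _
        (by rw [hLdef, Finset.mem_filter]; exact ⟨Finset.mem_univ _, h⟩)
  have hBcard : (B.card : ℝ) ≤ α * n := by
    have h1 : B.card ≤ Θ.card + L.card :=
      (Finset.card_le_card hBsub).trans (Finset.card_union_le _ _)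
    have h2 : (B.card : ℝ) ≤ (Θ.card : ℝ) + (L.card : ℝ) := by exact_mod_cast h1
    linarith
  -- small coordinates
  set t := ∑ i ∈ Bᶜ, (x i) ^ 2 with htdef
  have htle : t ≤ ν ^ 2 / 2 := by
    have hbound : ∀ i ∈ Bᶜ, (x i) ^ 2 ≤ ν ^ 2 / (2 * n) := by
      intro i hi
      rw [Finset.mem_compl, hBdef, Finset.mem_filter] at hi
      push_neg at hi
      have h1 : |x i| ≤ ν / Real.sqrt (2 * n) := hi (Finset.mem_univ _)
      have h2 : |x i| ^ 2 ≤ (ν / Real.sqrt (2 * n)) ^ 2 :=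
        pow_le_pow_left₀ (abs_nonneg _) h1 2
      rwa [div_pow, Real.sq_sqrt (by positivity), sq_abs] at h2
    have hcardc : ((Bᶜ).card : ℝ) ≤ n := by
      have := Finset.card_le_card (Finset.subset_univ (Bᶜ))
      simpa [Finset.card_univ] using (Nat.cast_le.mpr this : ((Bᶜ).card : ℝ) ≤ (Finset.univ.card : ℝ))
    calc t ≤ ∑ _i ∈ Bᶜ, (ν ^ 2 / (2 * n)) := Finset.sum_le_sum hbound
      _ = ((Bᶜ).card : ℝ) * (ν ^ 2 / (2 * n)) := by rw [Finset.sum_const, nsmul_eq_mul]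
      _ ≤ n * (ν ^ 2 / (2 * n)) := by
          exact mul_le_mul_of_nonneg_right hcardc (by positivity)
      _ = ν ^ 2 / 2 := by field_simp
  have htnn : 0 ≤ t := Finset.sum_nonneg (fun i _ => sq_nonneg _)
  have hsplit : ∑ i ∈ B, (x i) ^ 2 + t = 1 := by
    rw [htdef, Finset.sum_add_sum_compl, hsum]
  have hBsum : ∑ i ∈ B, (x i) ^ 2 = 1 - t := by linarith
  have hc2pos : 0 < 1 - t := by nlinarith
  set c := Real.sqrt (1 - t) with hcdef
  have hcpos : 0 < c := Real.sqrt_pos.mpr hc2pos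
  have hcsq : c ^ 2 = 1 - t := Real.sq_sqrt hc2pos.le
  have hcge : 1 - t ≤ c := by
    have h1 : (1 - t) ^ 2 ≤ 1 - t := by nlinarith
    have h2 := Real.sqrt_le_sqrt h1
    rwa [Real.sqrt_sq hc2pos.le] at h2
  set v : EuclideanSpace ℝ (Fin n) := WithLp.toLp 2 (fun i => if i ∈ B then x i / c else 0) with hvdef
  have hvi : ∀ i, v i = if i ∈ B then x i / c else 0 := fun i => rfl
  have hvsum : ∑ i, (v i) ^ 2 = 1 := by
    have step : ∀ i, (v i) ^ 2 = if i ∈ B then (x i) ^ 2 / (1 - t) else 0 := by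
      intro i
      rw [hvi i]
      split_ifs with h
      · rw [div_pow, hcsq]
      · simp
    calc ∑ i, (v i) ^ 2 = ∑ i, (if i ∈ B then (x i) ^ 2 / (1 - t) else 0) := by
          exact Finset.sum_congr rfl (fun i _ => step i)
      _ = ∑ i ∈ B, (x i) ^ 2 / (1 - t) := by
          rw [Finset.sum_ite_mem, Finset.univ_inter]
      _ = (∑ i ∈ B, (x i) ^ 2) / (1 - t) := by rw [Finset.sum_div]
      _ = 1 := by rw [hBsum, div_self hc2pos.ne']
  have hvnorm : ‖v‖ = 1 := by
    rw [EuclideanSpace.norm_eq]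
    have : ∑ i, ‖v i‖ ^ 2 = 1 := by
      simpa [Real.norm_eq_abs, sq_abs] using hvsum
    rw [this, Real.sqrt_one]
  have hsupp : (suppCard v : ℝ) ≤ α * n := by
    have hsub : (Finset.univ.filter fun i => v i ≠ 0) ⊆ B := by
      intro i hi
      rw [Finset.mem_filter] at hi
      by_contra h
      exact hi.2 (by rw [hvi i, if_neg h])
    have h1 : suppCard v ≤ B.card := Finset.card_le_card hsub
    have h2 : (suppCard v : ℝ) ≤ (B.card : ℝ) := by exact_mod_cast h1
    linarith
  have hdist : ‖x - v‖ ≤ ν := by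
    have hxvi : ∀ i, (x - v) i = x i - v i := fun i => rfl
    have hsq : ∑ i, ((x - v) i) ^ 2 = 2 - 2 * c := by
      have hsplit2 : ∑ i, ((x - v) i) ^ 2
          = ∑ i ∈ B, ((x - v) i) ^ 2 + ∑ i ∈ Bᶜ, ((x - v) i) ^ 2 :=
        (Finset.sum_add_sum_compl B _).symm
      have hB : ∑ i ∈ B, ((x - v) i) ^ 2 = (1 - t) * (1 - 1 / c) ^ 2 := by
        have : ∀ i ∈ B, ((x - v) i) ^ 2 = (x i) ^ 2 * (1 - 1 / c) ^ 2 := by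
          intro i hi
          rw [hxvi i, hvi i, if_pos hi]
          field_simp
        rw [Finset.sum_congr rfl this, ← Finset.sum_mul, hBsum]
      have hC : ∑ i ∈ Bᶜ, ((x - v) i) ^ 2 = t := by
        refine Finset.sum_congr rfl ?_
        intro i hi
        rw [hxvi i, hvi i, if_neg (by simpa using hi), sub_zero]
      rw [hsplit2, hB, hC]
      have hexp : (1 - t) * (1 - 1 / c) ^ 2 = (c - 1) ^ 2 := by
        have : (1 - 1 / c) = (c - 1) / c := by field_simp
        rw [this, div_pow, ← hcsq]
        field_simp
      rw [hexp]
      nlinarith [hcsq]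
    have hle : ∑ i, ((x - v) i) ^ 2 ≤ ν ^ 2 := by
      rw [hsq]; nlinarith
    rw [EuclideanSpace.norm_eq]
    have heq : ∑ i, ‖(x - v) i‖ ^ 2 = ∑ i, ((x - v) i) ^ 2 := by
      simp [Real.norm_eq_abs, sq_abs]
    rw [heq]
    calc Real.sqrt (∑ i, ((x - v) i) ^ 2) ≤ Real.sqrt (ν ^ 2) := Real.sqrt_le_sqrt hle
      _ = ν := Real.sqrt_sq hν0.le
  exact ⟨hx1, v, hvnorm, hsupp, hdist⟩
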